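/- Let A, B, C, Q, Q̄ be real matrices of compatible dimensions, let n be the dimension of A, and suppose that C(A+BQC)^ℓ B R = C(A+BQ̄C)^ℓ B R for all ℓ with 0 ≤ ℓ ≤ 2n−1. Then C(A+BQC)^ℓ B R = C(A+BQ̄C)^ℓ B R for all ℓ ∈ ℕ. -/

import Mathlib

open Matrix

lemma markov_zero {ι κ κ' : Type*} [Fintype ι] [DecidableEq ι]
    (T : Matrix ι ι ℝ) (Cb : Matrix κ ι ℝ) (Bb : Matrix ι κ' ℝ)
    (h : ∀ ℓ < Fintype.card ι, Cb * T ^ ℓ * Bb = 0) :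
    ∀ ℓ, Cb * T ^ ℓ * Bb = 0 := by
  set d := Fintype.card ι with hd
  have h0 : Polynomial.aeval T T.charpoly = 0 := Matrix.aeval_self_charpoly T
  rw [Polynomial.aeval_eq_sum_range] at h0
  have hdeg : T.charpoly.natDegree = d := Matrix.charpoly_natDegree_eq_dim T
  have hlead : T.charpoly.coeff d = 1 := by
    have := (Matrix.charpoly_monic T).coeff_natDegree
    rwa [hdeg] at this
  rw [hdeg, Finset.sum_range_succ, hlead, one_smul] at h0
  have hrec : T ^ d = -∑ i ∈ Finset.range d, T.charpoly.coeff i • T ^ i := by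
    linear_combination (norm := module) h0
  intro ℓ
  induction ℓ using Nat.strong_induction_on with
  | _ ℓ ih =>
    by_cases hl : ℓ < d
    · exact h ℓ hl
    · push_neg at hl
      obtain ⟨k, rfl⟩ : ∃ k, ℓ = k + d := ⟨ℓ - d, (Nat.sub_add_cancel hl).symm⟩
      rw [pow_add, hrec]
      have : Cb * (T ^ k * -∑ i ∈ Finset.range d, T.charpoly.coeff i • T ^ i) * Bb
          = -∑ i ∈ Finset.range d, T.charpoly.coeff i • (Cb * T ^ (k + i) * Bb) := by
        simp only [Matrix.mul_neg, Matrix.neg_mul, Matrix.mul_sum, Matrix.sum_mul,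
          Matrix.mul_smul, Matrix.smul_mul, pow_add, Matrix.mul_assoc]
      rw [this]
      have hz : ∀ i ∈ Finset.range d, T.charpoly.coeff i • (Cb * T ^ (k + i) * Bb) = 0 := by
        intro i hi
        rw [ih (k + i) (by simp at hi; omega), smul_zero]
      rw [Finset.sum_eq_zero hz, neg_zero]

theorem stmt5 {n m p q : ℕ}
    (A : Matrix (Fin n) (Fin n) ℝ) (B : Matrix (Fin n) (Fin m) ℝ)
    (C : Matrix (Fin p) (Fin n) ℝ) (Q Qbar : Matrix (Fin m) (Fin p) ℝ)
    (R : Matrix (Fin m) (Fin q) ℝ)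
    (h : ∀ ℓ : ℕ, ℓ < 2 * n →
      C * (A + B * Q * C) ^ ℓ * B * R = C * (A + B * Qbar * C) ^ ℓ * B * R) :
    ∀ ℓ : ℕ,
      C * (A + B * Q * C) ^ ℓ * B * R = C * (A + B * Qbar * C) ^ ℓ * B * R := by
  set M := A + B * Q * C with hM
  set N := A + B * Qbar * C with hN
  let T : Matrix (Fin n ⊕ Fin n) (Fin n ⊕ Fin n) ℝ := fromBlocks M 0 0 N
  let Cb : Matrix (Fin p) (Fin n ⊕ Fin n) ℝ := fromCols C (-C)
  let Bb : Matrix (Fin n ⊕ Fin n) (Fin q) ℝ := fromRows (B * R) (B * R)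
  have hTpow : ∀ ℓ, T ^ ℓ = fromBlocks (M ^ ℓ) 0 0 (N ^ ℓ) := by
    intro ℓ
    induction ℓ with
    | zero => simp [fromBlocks_one]
    | succ k ih =>
      rw [pow_succ, ih, pow_succ, pow_succ]
      show _ * fromBlocks M 0 0 N = _
      rw [fromBlocks_multiply]
      simp
  have key : ∀ ℓ, Cb * T ^ ℓ * Bb = C * M ^ ℓ * B * R - C * N ^ ℓ * B * R := by
    intro ℓ
    rw [hTpow]
    show fromCols C (-C) * _ * fromRows (B * R) (B * R) = _
    rw [fromCols_mul_fromBlocks, fromCols_mul_fromRows]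
    simp [Matrix.mul_assoc, sub_eq_add_neg]
  have hcard : Fintype.card (Fin n ⊕ Fin n) = 2 * n := by
    simp [Fintype.card_sum, two_mul]
  have hz : ∀ ℓ, Cb * T ^ ℓ * Bb = 0 := by
    apply markov_zero
    intro ℓ hℓ
    rw [key, sub_eq_zero]
    exact h ℓ (by rwa [hcard] at hℓ)
  intro ℓ
  have := hz ℓ
  rw [key, sub_eq_zero] at this
  exact this
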